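/- arXiv:1202.6263 — 2 statements merged into one kernel-verified Lean document; each statement's English description precedes it below -/
import Mathlib

section
/- Let p̃ be a probability mass function on ℕ with finite support whose support, listed in increasing order, is x₁ < x₂ < … < x_N, let s̃ = x_N, and let p̂ be the constrained least squares estimator with ŝ the maximum of its support. Then: (a) p̂ is linear on {0, …, x₁ + 1}, i.e., p̂(k+1) − 2 p̂(k) + p̂(k−1) = 0 for all 1 ≤ k ≤ x₁; (b) p̂ is linear on {s̃ − 1, …, ŝ}, i.e., p̂(k+1) − 2 p̂(k) + p̂(k−1) = 0 for all s̃ ≤ k ≤ ŝ − 1; (c) if N ≥ 2, then for each 1 ≤ j ≤ N − 1 the set of points l with x_j ≤ l ≤ x_{j+1} at which p̂ has a change of slope (i.e., p̂(l+1) − 2 p̂(l) + p̂(l−1) > 0) has at most two elements, and if it has exactly two elements they are consecutive integers. -/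
open scoped BigOperators

noncomputable section

open Filter Finset

/-- A discrete function `f : ℕ → ℝ` is convex if
`f(i+1) - 2 f(i) + f(i-1) ≥ 0` for every `i ≥ 1`. -/
def ConvexNat (f : ℕ → ℝ) : Prop :=
  ∀ i : ℕ, 0 ≤ f (i + 2) - 2 * f (i + 1) + f i

/-- `𝒦`: convex, nonnegative functions on `ℕ` tending to `0` at infinity. -/
def MemK (f : ℕ → ℝ) : Prop :=
  ConvexNat f ∧ (∀ i, 0 ≤ f i) ∧ Filter.Tendsto f Filter.atTop (nhds 0)

/-- `𝒞`: elements of `𝒦` summing to one. -/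
def MemC (f : ℕ → ℝ) : Prop := MemK f ∧ ∑' i, f i = 1

/-- The least squares criterion `Q(f) = (1/2) ∑ f(i)² − ∑ f(i) p̃(i)`. -/
def Crit (ptil f : ℕ → ℝ) : ℝ :=
  (1 / 2) * ∑' i, (f i) ^ 2 - ∑' i, f i * ptil i

/-- A probability mass function on `ℕ` with finite support. -/
def IsFinPMF (p : ℕ → ℝ) : Prop :=
  (∀ i, 0 ≤ p i) ∧ (Function.support p).Finite ∧ ∑' i, p i = 1

/-- `s` is the maximum of the support of `p`. -/
def IsMaxSupport (p : ℕ → ℝ) (s : ℕ) : Prop :=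
  p s ≠ 0 ∧ ∀ i, p i ≠ 0 → i ≤ s

/-! ### Auxiliary lemmas -/

lemma conv_diff_mono (f : ℕ → ℝ) (hc : ConvexNat f) :
    ∀ i j : ℕ, i ≤ j → f (i+1) - f i ≤ f (j+1) - f j := by
  intro i j hij
  induction j with
  | zero => simp_all
  | succ n ih =>
    rcases Nat.lt_or_ge i (n+1) with h | h
    · have := ih (Nat.lt_succ_iff.mp h)
      have h2 := hc n
      linarith
    · have : i = n + 1 := le_antisymm hij h
      subst this; rfl

lemma conv_antitone (f : ℕ → ℝ) (hc : ConvexNat f)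
    (h0 : Tendsto f atTop (nhds 0)) : ∀ i j : ℕ, i ≤ j → f j ≤ f i := by
  have key : ∀ i : ℕ, f (i+1) - f i ≤ 0 := by
    intro i
    by_contra h
    push_neg at h
    set c := f (i+1) - f i with hc'
    have hgrow : ∀ n : ℕ, f (i+1) + n * c ≤ f (i+1+n) := by
      intro n
      induction n with
      | zero => simp
      | succ m ih =>
        have h1 := conv_diff_mono f hc i (i+1+m) (by omega)
        have e : i+1+(m+1) = (i+1+m)+1 := by omega
        rw [e]
        push_cast
        push_cast at ih
        linarith
    have hev := h0.eventually (eventually_lt_nhds (show (0:ℝ) < 1 by norm_num))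
    rw [eventually_atTop] at hev
    obtain ⟨K, hK⟩ := hev
    obtain ⟨n, hn⟩ := exists_nat_gt (max (K:ℝ) ((1 - f (i+1)) / c))
    have hn1 : (1 - f (i+1)) / c < n := lt_of_le_of_lt (le_max_right _ _) hn
    have hn2 : K ≤ i + 1 + n := by
      have : (K:ℝ) < n := lt_of_le_of_lt (le_max_left _ _) hn
      have : K < n := by exact_mod_cast this
      omega
    have h1 : 1 - f (i+1) < n * c := (div_lt_iff₀ h).mp hn1
    have := hgrow n
    have := hK (i+1+n) hn2
    linarith
  intro i j hij
  induction j with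
  | zero => simp_all
  | succ n ih =>
    rcases Nat.lt_or_ge i (n+1) with h | h
    · have := ih (Nat.lt_succ_iff.mp h)
      have := key n
      linarith
    · have : i = n + 1 := le_antisymm hij h
      subst this; rfl

lemma conv_nonneg' (f : ℕ → ℝ) (hc : ConvexNat f)
    (h0 : Tendsto f atTop (nhds 0)) : ∀ i, 0 ≤ f i := by
  intro i
  refine le_of_tendsto h0 ?_
  rw [eventually_atTop]
  exact ⟨i, fun j hj => conv_antitone f hc h0 i j hj⟩

lemma memK_of (f : ℕ → ℝ) (hc : ConvexNat f)
    (h0 : Tendsto f atTop (nhds 0)) : MemK f :=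
  ⟨hc, conv_nonneg' f hc h0, h0⟩

/-- The triangular function `T_j(i) = max (j - i) 0`. -/
def Tfun (j i : ℕ) : ℝ := ((j - i : ℕ) : ℝ)

lemma Tfun_zero (j i : ℕ) (h : j ≤ i) : Tfun j i = 0 := by
  simp [Tfun, Nat.sub_eq_zero_of_le h]

lemma Tfun_secdiff (j i : ℕ) :
    Tfun j (i+2) - 2 * Tfun j (i+1) + Tfun j i = if j = i + 1 then 1 else 0 := by
  unfold Tfun
  rcases Nat.lt_or_ge i j with h | h
  · rcases Nat.lt_or_ge (i+1) j with h1 | h1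
    · rcases Nat.lt_or_ge (i+2) j with h2 | h2
      · rw [if_neg (by omega)]
        have e : (↑(j - (i+2)) : ℝ) = (j:ℝ) - i - 2 := by
          push_cast [Nat.cast_sub (by omega : i+2 ≤ j)]
          ring
        rw [e]
        rw [Nat.cast_sub (by omega : i+1 ≤ j), Nat.cast_sub (by omega : i ≤ j)]
        push_cast; ring
      · have : j = i + 2 := by omega
        subst this
        rw [if_neg (by omega)]
        norm_num
    · have : j = i + 1 := by omega
      subst this
      rw [if_pos rfl]
      simp [Nat.sub_eq_zero_of_le]
  · rw [if_neg (by omega)]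
    rw [Nat.sub_eq_zero_of_le h, Nat.sub_eq_zero_of_le (by omega),
      Nat.sub_eq_zero_of_le (by omega)]
    norm_num

lemma Tfun_tendsto (j : ℕ) : Tendsto (Tfun j) atTop (nhds 0) := by
  apply tendsto_nhds_of_eventually_eq
  rw [eventually_atTop]
  exact ⟨j, fun i hi => Tfun_zero j i hi⟩

lemma summable_fin (h : ℕ → ℝ) (M : ℕ) (hz : ∀ i, M ≤ i → h i = 0) : Summable h :=
  summable_of_ne_finset_zero (s := Finset.range M)
    (fun i hi => hz i (by simpa using hi))

/-- The key variational inequality for the minimizer. -/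
lemma var_lemma (ptil phat : ℕ → ℝ)
    (hptilfin : (Function.support ptil).Finite)
    (hphat2 : Summable (fun i => (phat i) ^ 2))
    (hmin : ∀ f : ℕ → ℝ, MemK f → Summable (fun i => (f i) ^ 2) →
      Crit ptil phat ≤ Crit ptil f)
    (g : ℕ → ℝ) (M : ℕ) (hg : ∀ i, M ≤ i → g i = 0)
    (ε₀ : ℝ) (hε₀ : 0 < ε₀)
    (hK : ∀ ε : ℝ, 0 < ε → ε ≤ ε₀ → MemK (fun i => phat i + ε * g i)) :
    0 ≤ (∑' i, g i * phat i) - ∑' i, g i * ptil i := by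
  classical
  set A := ∑' i, g i * phat i with hA
  set B := ∑' i, g i * ptil i with hB
  set C := ∑' i, (g i) ^ 2 with hC
  have hCnn : 0 ≤ C := tsum_nonneg (fun i => sq_nonneg _)
  have hsgp : Summable (fun i => g i * phat i) :=
    summable_fin _ M (fun i hi => by simp [hg i hi])
  have hsg2 : Summable (fun i => (g i) ^ 2) :=
    summable_fin _ M (fun i hi => by simp [hg i hi])
  obtain ⟨P, hP⟩ := hptilfin.exists_finset_coe
  have hptz : ∀ i, i ∉ P → ptil i = 0 := by
    intro i hi
    by_contra h
    apply hi
    have : i ∈ Function.support ptil := h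
    rwa [← hP] at this
  have hspt : Summable (fun i => phat i * ptil i) :=
    summable_of_ne_finset_zero (s := P) (fun i hi => by simp [hptz i hi])
  have hsgt : Summable (fun i => g i * ptil i) :=
    summable_of_ne_finset_zero (s := P) (fun i hi => by simp [hptz i hi])
  have key : ∀ ε : ℝ, 0 < ε → ε ≤ ε₀ → 0 ≤ ε * (A - B) + ε ^ 2 / 2 * C := by
    intro ε hε hεε
    have hrest : Summable (fun i => 2 * ε * (g i * phat i) + ε ^ 2 * (g i) ^ 2) :=
      ((hsgp.mul_left _).add (hsg2.mul_left _))
    have hsq : Summable (fun i => (phat i + ε * g i) ^ 2) :=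
      (hphat2.add hrest).congr (fun i => by ring)
    have h1 := hmin _ (hK ε hε hεε) hsq
    unfold Crit at h1
    have e1 : ∑' i, (phat i + ε * g i) ^ 2
        = (∑' i, (phat i) ^ 2) + (2 * ε * A + ε ^ 2 * C) := by
      have e : ∑' i, (phat i + ε * g i) ^ 2
          = ∑' i, ((phat i) ^ 2 + (2 * ε * (g i * phat i) + ε ^ 2 * (g i) ^ 2)) :=
        tsum_congr (fun i => by ring)
      rw [e, Summable.tsum_add hphat2 hrest,
        Summable.tsum_add (hsgp.mul_left _) (hsg2.mul_left _), tsum_mul_left, tsum_mul_left]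
    have e2 : ∑' i, (phat i + ε * g i) * ptil i
        = (∑' i, phat i * ptil i) + ε * B := by
      have e : ∑' i, (phat i + ε * g i) * ptil i
          = ∑' i, (phat i * ptil i + ε * (g i * ptil i)) :=
        tsum_congr (fun i => by ring)
      rw [e, Summable.tsum_add hspt (hsgt.mul_left _), tsum_mul_left]
    rw [e1, e2] at h1
    nlinarith [h1]
  by_contra hcon
  push_neg at hcon
  rcases eq_or_lt_of_le hCnn with hC0 | hC0
  · have := key ε₀ hε₀ le_rfl
    rw [← hC0] at this
    nlinarith
  · set ε := min ε₀ ((B - A) / C) with hε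
    have hεpos : 0 < ε := lt_min hε₀ (div_pos (by linarith) hC0)
    have := key ε hεpos (min_le_left _ _)
    have hεle : ε ≤ (B - A) / C := min_le_right _ _
    have h2 : ε * C ≤ B - A := by
      calc ε * C ≤ (B - A) / C * C := mul_le_mul_of_nonneg_right hεle (le_of_lt hC0)
        _ = B - A := by field_simp
    nlinarith

/-- The double cumulative sum `Φ_f(j) = ∑_{i<j} (j-i) f(i)`. -/
def Phi (f : ℕ → ℝ) (j : ℕ) : ℝ := ∑ i ∈ Finset.range j, ((j - i : ℕ) : ℝ) * f i

lemma tsum_Tfun_mul (f : ℕ → ℝ) (j : ℕ) :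
    ∑' i, Tfun j i * f i = Phi f j := by
  rw [Phi]
  apply tsum_eq_sum
  intro i hi
  rw [Finset.mem_range, not_lt] at hi
  rw [Tfun_zero j i hi, zero_mul]

lemma Phi_succ (f : ℕ → ℝ) (j : ℕ) :
    Phi f (j+1) = Phi f j + ∑ i ∈ Finset.range (j+1), f i := by
  unfold Phi
  have e : ∀ i ∈ Finset.range (j+1), ((j+1-i : ℕ) : ℝ) * f i
      = ((j - i : ℕ) : ℝ) * f i + f i := by
    intro i hi
    rw [Finset.mem_range] at hi
    have : (j+1-i : ℕ) = (j-i) + 1 := by omega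
    rw [this]
    push_cast
    ring
  rw [Finset.sum_congr rfl e, Finset.sum_add_distrib, Finset.sum_range_succ
    (fun i => ((j - i : ℕ) : ℝ) * f i)]
  simp

lemma Phi_secdiff (f : ℕ → ℝ) (m : ℕ) :
    Phi f (m+2) - 2 * Phi f (m+1) + Phi f m = f (m+1) := by
  have h1 := Phi_succ f (m+1)
  have h2 := Phi_succ f m
  have h3 : ∑ i ∈ Finset.range (m+2), f i = (∑ i ∈ Finset.range (m+1), f i) + f (m+1) :=
    Finset.sum_range_succ f (m+1)
  linarith

lemma interval_zero (φ : ℕ → ℝ) (a b : ℕ)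
    (ha : φ a = 0) (hb : φ b = 0) (hnn : ∀ j, 0 ≤ φ j)
    (hconv : ∀ m, a < m → m < b → 0 ≤ φ (m+1) - 2 * φ m + φ (m-1)) :
    ∀ i, a ≤ i → i ≤ b → φ i = 0 := by
  have step1 : ∀ i, a ≤ i → i < b → 0 ≤ φ (i+1) - φ i := by
    intro i hai
    induction i, hai using Nat.le_induction with
    | base => intro _; rw [ha]; simpa using hnn (a+1)
    | succ i hai ih =>
      intro hib
      have h1 := hconv (i+1) (by omega) hib
      have h2 := ih (by omega)
      simp only [Nat.add_sub_cancel] at h1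
      linarith
  have mono : ∀ i j, a ≤ i → i ≤ j → j ≤ b → φ i ≤ φ j := by
    intro i j hai hij
    induction j, hij using Nat.le_induction with
    | base => intro _; rfl
    | succ j hij ih =>
      intro hjb
      have := step1 j (by omega) (by omega)
      have := ih (by omega)
      linarith
  intro i hai hib
  have h1 := mono i b hai hib le_rfl
  rw [hb] at h1
  exact le_antisymm h1 (hnn i)

lemma memK_pert (phat : ℕ → ℝ) (hK : MemK phat) (j : ℕ) (ε : ℝ) (hε : 0 ≤ ε) :
    MemK (fun i => phat i + ε * Tfun j i) := by
  apply memK_of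
  · intro i
    have h1 := hK.1 i
    have h2 := Tfun_secdiff j i
    beta_reduce
    by_cases h : j = i + 1
    · rw [if_pos h] at h2
      nlinarith
    · rw [if_neg h] at h2
      nlinarith
  · have := hK.2.2.add ((Tfun_tendsto j).const_mul ε)
    simpa using this

lemma memK_pert_neg (phat : ℕ → ℝ) (hK : MemK phat) (l : ℕ) (hl : 1 ≤ l)
    (ε : ℝ) (hε : 0 ≤ ε) (hεc : ε ≤ phat (l+1) - 2 * phat l + phat (l-1)) :
    MemK (fun i => phat i + ε * (-(Tfun l i))) := by
  apply memK_of
  · intro i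
    have h1 := hK.1 i
    have h2 := Tfun_secdiff l i
    beta_reduce
    by_cases h : l = i + 1
    · rw [if_pos h] at h2
      subst h
      simp only [Nat.add_sub_cancel] at hεc
      nlinarith
    · rw [if_neg h] at h2
      nlinarith
  · have := hK.2.2.add (((Tfun_tendsto l).neg).const_mul ε)
    simpa using this

lemma memK_scale (phat : ℕ → ℝ) (hK : MemK phat) (c : ℝ) (hc : 0 ≤ c) :
    MemK (fun i => c * phat i) := by
  apply memK_of
  · intro i
    have h1 := hK.1 i
    beta_reduce
    nlinarith
  · simpa using hK.2.2.const_mul c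

lemma memK_scale_up (phat : ℕ → ℝ) (hK : MemK phat) (ε : ℝ) (hε : 0 ≤ ε) :
    MemK (fun i => phat i + ε * phat i) := by
  have e : (fun i => phat i + ε * phat i) = fun i => (1 + ε) * phat i :=
    funext fun i => by ring
  rw [e]
  exact memK_scale phat hK (1 + ε) (by linarith)

lemma memK_scale_down (phat : ℕ → ℝ) (hK : MemK phat) (ε : ℝ) (hε : 0 ≤ ε)
    (hε1 : ε ≤ 1) : MemK (fun i => phat i + ε * (-phat i)) := by
  have e : (fun i => phat i + ε * (-phat i)) = fun i => (1 - ε) * phat i :=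
    funext fun i => by ring
  rw [e]
  exact memK_scale phat hK (1 - ε) (by linarith)

/-- Lemma 4: with the support of `p̃` listed as `x₁ < … < x_N` and `s̃ = x_N`,
the constrained LSE `p̂` (with support maximum `ŝ`) is
(a) linear on `{0,…,x₁+1}`, (b) linear on `{s̃−1,…,ŝ}`, and
(c) for `N ≥ 2` and `1 ≤ j ≤ N−1`, any two distinct points of `{x_j,…,x_{j+1}}`
at which `p̂` has a change of slope are consecutive integers (in particular there are
at most two such points). -/
theorem stmt_15 (ptil : ℕ → ℝ) (hptil : IsFinPMF ptil)
    (N : ℕ) (hN : 1 ≤ N) (x : ℕ → ℕ)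
    (hmono : ∀ i j : ℕ, 1 ≤ i → i < j → j ≤ N → x i < x j)
    (hsupp : ∀ k : ℕ, ptil k ≠ 0 ↔ ∃ i : ℕ, 1 ≤ i ∧ i ≤ N ∧ x i = k)
    (phat : ℕ → ℝ) (hphatK : MemK phat)
    (hphat2 : Summable (fun i => (phat i) ^ 2))
    (hmin : ∀ f : ℕ → ℝ, MemK f → Summable (fun i => (f i) ^ 2) →
      Crit ptil phat ≤ Crit ptil f)
    (shat : ℕ) (hshat : IsMaxSupport phat shat) :
    (∀ k : ℕ, 1 ≤ k → k ≤ x 1 →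
      phat (k + 1) - 2 * phat k + phat (k - 1) = 0) ∧
    (∀ k : ℕ, x N ≤ k → k + 1 ≤ shat →
      phat (k + 1) - 2 * phat k + phat (k - 1) = 0) ∧
    (2 ≤ N → ∀ j : ℕ, 1 ≤ j → j + 1 ≤ N →
      ∀ l₁ l₂ : ℕ,
        (1 ≤ l₁ ∧ x j ≤ l₁ ∧ l₁ ≤ x (j + 1) ∧
          0 < phat (l₁ + 1) - 2 * phat l₁ + phat (l₁ - 1)) →
        (1 ≤ l₂ ∧ x j ≤ l₂ ∧ l₂ ≤ x (j + 1) ∧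
          0 < phat (l₂ + 1) - 2 * phat l₂ + phat (l₂ - 1)) →
        l₁ < l₂ → l₂ = l₁ + 1) := by
  classical
  obtain ⟨hptnn, hptfin, hptsum⟩ := hptil
  obtain ⟨hconv, hnn, htend⟩ := hphatK
  have hphatK' : MemK phat := ⟨hconv, hnn, htend⟩
  have hmonoP : ∀ i j : ℕ, i ≤ j → phat j ≤ phat i := conv_antitone phat hconv htend
  have hpz : ∀ i, shat < i → phat i = 0 := by
    intro i hi
    by_contra h
    exact absurd (hshat.2 i h) (by omega)
  have hxle : ∀ i j : ℕ, 1 ≤ i → i ≤ j → j ≤ N → x i ≤ x j := by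
    intro i j h1 h2 h3
    rcases eq_or_lt_of_le h2 with rfl | h
    · exact le_rfl
    · exact le_of_lt (hmono i j h1 h h3)
  have hpt_lt : ∀ m, m < x 1 → ptil m = 0 := by
    intro m hm
    by_contra h
    obtain ⟨i, hi1, hiN, hxi⟩ := (hsupp m).mp h
    have := hxle 1 i le_rfl hi1 hiN
    omega
  have hpt_gt : ∀ m, x N < m → ptil m = 0 := by
    intro m hm
    by_contra h
    obtain ⟨i, hi1, hiN, hxi⟩ := (hsupp m).mp h
    have := hxle i N hi1 hiN le_rfl
    omega
  have hpt_mid : ∀ j m, 1 ≤ j → j + 1 ≤ N → x j < m → m < x (j+1) → ptil m = 0 := by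
    intro j m hj hjN h1 h2
    by_contra h
    obtain ⟨i, hi1, hiN, hxi⟩ := (hsupp m).mp h
    rcases le_or_gt i j with h' | h'
    · have := hxle i j hi1 h' (by omega); omega
    · have := hxle (j+1) i (by omega) h' hiN; omega
  set φ : ℕ → ℝ := fun j => Phi phat j - Phi ptil j with hφdef
  have K1 : ∀ j, 0 ≤ φ j := by
    intro j
    have h := var_lemma ptil phat hptfin hphat2 hmin (Tfun j) j
      (fun i hi => Tfun_zero j i hi) 1 one_pos
      (fun ε hε _ => memK_pert phat hphatK' j ε (le_of_lt hε))
    rw [tsum_Tfun_mul, tsum_Tfun_mul] at h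
    simpa [hφdef] using h
  have K2 : ∀ l, 1 ≤ l → 0 < phat (l+1) - 2 * phat l + phat (l-1) → φ l = 0 := by
    intro l hl hknot
    refine le_antisymm ?_ (K1 l)
    have h := var_lemma ptil phat hptfin hphat2 hmin (fun i => -(Tfun l i)) l
      (fun i hi => by show -(Tfun l i) = 0; rw [Tfun_zero l i hi, neg_zero]) _ hknot
      (fun ε hε hεc => memK_pert_neg phat hphatK' l hl ε (le_of_lt hε) hεc)
    have e1 : ∑' i, -(Tfun l i) * phat i = -(Phi phat l) := by
      rw [← tsum_Tfun_mul phat l, ← tsum_neg]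
      exact tsum_congr (fun i => by ring)
    have e2 : ∑' i, -(Tfun l i) * ptil i = -(Phi ptil l) := by
      rw [← tsum_Tfun_mul ptil l, ← tsum_neg]
      exact tsum_congr (fun i => by ring)
    rw [e1, e2] at h
    simp only [hφdef]
    linarith
  have hsecφ : ∀ t, φ (t+2) - 2 * φ (t+1) + φ t = phat (t+1) - ptil (t+1) := by
    intro t
    simp only [hφdef]
    have h1 := Phi_secdiff phat t
    have h2 := Phi_secdiff ptil t
    linarith
  have hφ0 : φ 0 = 0 := by simp [hφdef, Phi]
  have hφ1 : φ 1 = phat 0 - ptil 0 := by simp [hφdef, Phi]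
  refine ⟨?_, ?_, ?_⟩
  · -- part (a)
    intro k hk1 hkx
    obtain ⟨m, rfl⟩ : ∃ m, k = m + 1 := ⟨k - 1, by omega⟩
    simp only [Nat.add_sub_cancel]
    show phat (m+2) - 2 * phat (m+1) + phat m = 0
    by_contra hne
    have hknot : 0 < phat (m+2) - 2 * phat (m+1) + phat m :=
      lt_of_le_of_ne (hconv m) (Ne.symm hne)
    have hφk : φ (m+1) = 0 := by
      apply K2 (m+1) (by omega)
      simpa using hknot
    have hcv : ∀ m', 0 < m' → m' < m + 1 → 0 ≤ φ (m'+1) - 2 * φ m' + φ (m'-1) := by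
      intro m' h1 h2
      obtain ⟨t, rfl⟩ : ∃ t, m' = t + 1 := ⟨m' - 1, by omega⟩
      simp only [Nat.add_sub_cancel]
      show 0 ≤ φ (t+2) - 2 * φ (t+1) + φ t
      rw [hsecφ t, hpt_lt (t+1) (by omega)]
      simpa using hnn (t+1)
    have hz := interval_zero φ 0 (m+1) hφ0 hφk K1 hcv
    have hφ1' : φ 1 = 0 := hz 1 (by omega) (by omega)
    have hp0 : phat 0 = 0 := by
      rw [hφ1, hpt_lt 0 (by omega)] at hφ1'
      linarith
    have hs : phat shat ≤ 0 := hp0 ▸ hmonoP 0 shat (Nat.zero_le _)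
    exact absurd (le_antisymm hs (hnn shat)) hshat.1
  · -- part (b)
    intro k hkN hks
    rcases Nat.eq_zero_or_pos k with rfl | hk1
    · exfalso
      have hptm : ∀ m, m ≠ 0 → ptil m = 0 := fun m hm => hpt_gt m (by omega)
      have hpt0 : ptil 0 = 1 := by
        rw [← hptsum]
        exact (tsum_eq_single 0 (fun m hm => hptm m hm)).symm
      have hK11 := K1 1
      rw [hφ1, hpt0] at hK11
      have hphat0 : 1 ≤ phat 0 := by linarith
      have hgz : ∀ i, shat + 1 ≤ i → phat i = 0 := fun i hi => hpz i (by omega)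
      have hv1 := var_lemma ptil phat hptfin hphat2 hmin phat (shat+1) hgz 1 one_pos
        (fun ε hε _ => memK_scale_up phat hphatK' ε (le_of_lt hε))
      have hv2 := var_lemma ptil phat hptfin hphat2 hmin (fun i => -(phat i)) (shat+1)
        (fun i hi => by show -(phat i) = 0; rw [hgz i hi, neg_zero]) (1/2) (by norm_num)
        (fun ε hε hε2 => memK_scale_down phat hphatK' ε (le_of_lt hε) (by linarith))
      have e1 : ∑' i, -(phat i) * phat i = -(∑' i, phat i * phat i) := by
        rw [← tsum_neg]; exact tsum_congr (fun i => by ring)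
      have e2 : ∑' i, -(phat i) * ptil i = -(∑' i, phat i * ptil i) := by
        rw [← tsum_neg]; exact tsum_congr (fun i => by ring)
      rw [e1, e2] at hv2
      have heq : ∑' i, phat i * phat i = ∑' i, phat i * ptil i := by linarith
      have hpt_eval : ∑' i, phat i * ptil i = phat 0 := by
        rw [tsum_eq_single 0 (fun m hm => by rw [hptm m hm, mul_zero]), hpt0, mul_one]
      have hsum_pp : Summable (fun i => phat i * phat i) :=
        hphat2.congr (fun i => by ring)
      have hge : phat 0 * phat 0 + phat shat * phat shat ≤ ∑' i, phat i * phat i := by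
        have h := Summable.sum_le_tsum ({0, shat} : Finset ℕ)
          (fun i _ => mul_self_nonneg (phat i)) hsum_pp
        rwa [Finset.sum_pair (show (0:ℕ) ≠ shat by omega)] at h
      have hs0 : phat shat ≤ 0 := by nlinarith
      exact hshat.1 (le_antisymm hs0 (hnn shat))
    · obtain ⟨m, rfl⟩ : ∃ m, k = m + 1 := ⟨k - 1, by omega⟩
      simp only [Nat.add_sub_cancel]
      show phat (m+2) - 2 * phat (m+1) + phat m = 0
      by_contra hne
      have hknot : 0 < phat (m+2) - 2 * phat (m+1) + phat m :=
        lt_of_le_of_ne (hconv m) (Ne.symm hne)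
      have hφk : φ (m+1) = 0 := by
        apply K2 (m+1) (by omega)
        simpa using hknot
      have hknot2 : 0 < phat (shat+1+1) - 2 * phat (shat+1) + phat (shat+1-1) := by
        simp only [Nat.add_sub_cancel]
        show 0 < phat (shat+2) - 2 * phat (shat+1) + phat shat
        rw [hpz (shat+2) (by omega), hpz (shat+1) (by omega)]
        have := lt_of_le_of_ne (hnn shat) (Ne.symm hshat.1)
        linarith
      have hφs : φ (shat+1) = 0 := K2 (shat+1) (by omega) hknot2
      have hcv : ∀ m', m + 1 < m' → m' < shat + 1 →
          0 ≤ φ (m'+1) - 2 * φ m' + φ (m'-1) := by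
        intro m' h1 h2
        obtain ⟨t, rfl⟩ : ∃ t, m' = t + 1 := ⟨m' - 1, by omega⟩
        simp only [Nat.add_sub_cancel]
        show 0 ≤ φ (t+2) - 2 * φ (t+1) + φ t
        rw [hsecφ t, hpt_gt (t+1) (by omega)]
        simpa using hnn (t+1)
      have hz := interval_zero φ (m+1) (shat+1) hφk hφs K1 hcv
      obtain ⟨t, rfl⟩ : ∃ t, shat = t + 1 := ⟨shat - 1, by omega⟩
      have h1 := hsecφ t
      have z1 := hz (t+2) (by omega) (by omega)
      have z2 := hz (t+1) (by omega) (by omega)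
      have z3 := hz t (by omega) (by omega)
      rw [hpt_gt (t+1) (by omega), z1, z2, z3] at h1
      exact hshat.1 (by linarith)
  · -- part (c)
    intro hN2 j hj1 hjN l₁ l₂ h₁ h₂ hlt
    obtain ⟨hl₁1, hxl₁, hl₁x, hknot₁⟩ := h₁
    obtain ⟨hl₂1, hxl₂, hl₂x, hknot₂⟩ := h₂
    by_contra hne
    have hgap : l₁ + 2 ≤ l₂ := by omega
    have hφl₁ : φ l₁ = 0 := K2 l₁ hl₁1 hknot₁
    have hφl₂ : φ l₂ = 0 := K2 l₂ hl₂1 hknot₂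
    have hcv : ∀ m', l₁ < m' → m' < l₂ → 0 ≤ φ (m'+1) - 2 * φ m' + φ (m'-1) := by
      intro m' h1 h2
      obtain ⟨t, rfl⟩ : ∃ t, m' = t + 1 := ⟨m' - 1, by omega⟩
      simp only [Nat.add_sub_cancel]
      show 0 ≤ φ (t+2) - 2 * φ (t+1) + φ t
      rw [hsecφ t, hpt_mid j (t+1) hj1 hjN (by omega) (by omega)]
      simpa using hnn (t+1)
    have hz := interval_zero φ l₁ l₂ hφl₁ hφl₂ K1 hcv
    obtain ⟨t, rfl⟩ : ∃ t, l₂ = t + 2 := ⟨l₂ - 2, by omega⟩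
    have h1 := hsecφ t
    have z1 := hz (t+2) (by omega) le_rfl
    have z2 := hz (t+1) (by omega) (by omega)
    have z3 := hz t (by omega) (by omega)
    rw [hpt_mid j (t+1) hj1 hjN (by omega) (by omega), z1, z2, z3] at h1
    have hpt1 : phat (t+1) = 0 := by linarith
    have hp2 : phat (t+2) = 0 :=
      le_antisymm (hpt1 ▸ hmonoP (t+1) (t+2) (by omega)) (hnn _)
    have hp3 : phat (t+3) = 0 :=
      le_antisymm (hpt1 ▸ hmonoP (t+1) (t+3) (by omega)) (hnn _)
    rw [show t+2+1 = t+3 by omega, show t+2-1 = t+1 by omega] at hknot₂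
    rw [hpt1, hp2, hp3] at hknot₂
    linarith
end
end

section
/- Let p̃ be a probability mass function on ℕ with finite support and s̃ the maximum of its support, and let L ≥ s̃ + 1. For π ∈ ℳ^L, π minimizes Ψ over ℳ^L if and only if d_j(Ψ)(π) ≥ 0 for all 1 ≤ j ≤ L and d_j(Ψ)(π) = 0 for every j in the support of π (i.e., every j with π_j > 0). -/
open scoped BigOperators

noncomputable section

/-- The triangular function `T_j(i) = 2(j−i)/(j(j+1))` for `i < j`, `0` otherwise. -/
def Tri (j i : ℕ) : ℝ :=
  if i < j then 2 * ((j : ℝ) - (i : ℝ)) / ((j : ℝ) * ((j : ℝ) + 1)) else 0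

/-- The mixture criterion
`Ψ(π) = (1/2) ∑_i (∑_{j≥i+1} π_j T_j(i))² − ∑_i p̃(i) ∑_{j≥i+1} π_j T_j(i)`
(recall `T_j(i) = 0` for `j ≤ i`). -/
def Psi (ptil : ℕ → ℝ) (π : ℕ → ℝ) : ℝ :=
  (1 / 2) * ∑' i : ℕ, (∑' j : ℕ, π j * Tri j i) ^ 2 -
    ∑' i : ℕ, ptil i * ∑' j : ℕ, π j * Tri j i

/-- The directional derivative of `Ψ` at `μ` in the direction of the Dirac mass `δ_j`:
`d_j(Ψ)(μ) = ∑_{l=0}^{j−1} T_j(l) (∑_{j'≥l+1} μ_{j'} T_{j'}(l) − p̃(l))`. -/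
def dPsi (ptil : ℕ → ℝ) (j : ℕ) (μ : ℕ → ℝ) : ℝ :=
  ∑ l ∈ Finset.range j, Tri j l * ((∑' j' : ℕ, μ j' * Tri j' l) - ptil l)

/-- `ℳ^L`: nonnegative measures on `ℕ∖{0}` supported in `{1,…,L}`. -/
def MemML (L : ℕ) (π : ℕ → ℝ) : Prop :=
  π 0 = 0 ∧ (∀ j, 0 ≤ π j) ∧ ∀ j : ℕ, L < j → π j = 0

lemma Tri_eq_zero {j i : ℕ} (h : j ≤ i) : Tri j i = 0 := by
  simp [Tri, Nat.not_lt.mpr h]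

lemma Tri_zero_pos {j : ℕ} (hj : 1 ≤ j) : 0 < Tri j 0 := by
  have hj' : (0:ℝ) < j := by exact_mod_cast hj
  rw [Tri, if_pos (by omega : 0 < j)]
  apply div_pos
  · push_cast; nlinarith
  · nlinarith

lemma tsum_tri_eq (L : ℕ) (π : ℕ → ℝ) (hsup : ∀ j, L < j → π j = 0) (i : ℕ) :
    ∑' j, π j * Tri j i = ∑ j ∈ Finset.range (L+1), π j * Tri j i := by
  apply tsum_eq_sum
  intro j hj
  simp only [Finset.mem_range] at hj
  rw [hsup j (by omega), zero_mul]

lemma F_eq_zero (L : ℕ) (π : ℕ → ℝ) (i : ℕ) (hi : L ≤ i) :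
    ∑ j ∈ Finset.range (L+1), π j * Tri j i = 0 := by
  apply Finset.sum_eq_zero
  intro j hj
  simp only [Finset.mem_range] at hj
  rw [Tri_eq_zero (by omega), mul_zero]

lemma Psi_eq (ptil : ℕ → ℝ) (L : ℕ) (π : ℕ → ℝ) (hsup : ∀ j, L < j → π j = 0) :
    Psi ptil π =
      (1/2) * ∑ i ∈ Finset.range L, (∑ j ∈ Finset.range (L+1), π j * Tri j i)^2
      - ∑ i ∈ Finset.range L, ptil i * ∑ j ∈ Finset.range (L+1), π j * Tri j i := by
  unfold Psi
  have h1 : ∀ i, (∑' j, π j * Tri j i) = ∑ j ∈ Finset.range (L+1), π j * Tri j i :=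
    tsum_tri_eq L π hsup
  simp_rw [h1]
  rw [tsum_eq_sum (s := Finset.range L) (fun i hi => by
      simp only [Finset.mem_range] at hi
      rw [F_eq_zero L π i (by omega)]; ring),
    tsum_eq_sum (s := Finset.range L) (fun i hi => by
      simp only [Finset.mem_range] at hi
      rw [F_eq_zero L π i (by omega)]; ring)]

lemma dPsi_eq (ptil : ℕ → ℝ) (L : ℕ) (π : ℕ → ℝ) (hsup : ∀ j, L < j → π j = 0)
    (j : ℕ) (hj : j ≤ L) :
    dPsi ptil j π = ∑ l ∈ Finset.range L,
      Tri j l * ((∑ j' ∈ Finset.range (L+1), π j' * Tri j' l) - ptil l) := by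
  unfold dPsi
  simp_rw [tsum_tri_eq L π hsup]
  apply Finset.sum_subset (Finset.range_subset_range.mpr hj)
  intro l _ hl
  simp only [Finset.mem_range] at hl
  rw [Tri_eq_zero (by omega), zero_mul]

lemma Psi_diff (ptil : ℕ → ℝ) (L : ℕ) (π μ : ℕ → ℝ)
    (hπ : ∀ j, L < j → π j = 0) (hμ : ∀ j, L < j → μ j = 0) :
    Psi ptil μ - Psi ptil π =
      (∑ j ∈ Finset.range (L+1), (μ j - π j) * dPsi ptil j π) +
      (1/2) * ∑ i ∈ Finset.range L,
        ((∑ j ∈ Finset.range (L+1), μ j * Tri j i)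
          - ∑ j ∈ Finset.range (L+1), π j * Tri j i)^2 := by
  rw [Psi_eq ptil L π hπ, Psi_eq ptil L μ hμ]
  set a : ℕ → ℝ := fun i => ∑ j ∈ Finset.range (L+1), π j * Tri j i with ha
  set b : ℕ → ℝ := fun i => ∑ j ∈ Finset.range (L+1), μ j * Tri j i with hb
  have hS : ∑ j ∈ Finset.range (L+1), (μ j - π j) * dPsi ptil j π
      = ∑ l ∈ Finset.range L, (b l - a l) * (a l - ptil l) := by
    have hd : ∀ j ∈ Finset.range (L+1), (μ j - π j) * dPsi ptil j π =
        ∑ l ∈ Finset.range L, (μ j - π j) * Tri j l * (a l - ptil l) := by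
      intro j hj
      simp only [Finset.mem_range] at hj
      rw [dPsi_eq ptil L π hπ j (by omega), Finset.mul_sum]
      exact Finset.sum_congr rfl (fun l _ => by ring)
    rw [Finset.sum_congr rfl hd, Finset.sum_comm]
    refine Finset.sum_congr rfl (fun l _ => ?_)
    rw [← Finset.sum_mul]
    congr 1
    rw [hb, ha]
    rw [← Finset.sum_sub_distrib]
    exact Finset.sum_congr rfl (fun j _ => by ring)
  rw [hS]
  calc (1/2) * ∑ i ∈ Finset.range L, (b i)^2 - ∑ i ∈ Finset.range L, ptil i * b i
        - ((1/2) * ∑ i ∈ Finset.range L, (a i)^2 - ∑ i ∈ Finset.range L, ptil i * a i)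
      = ∑ i ∈ Finset.range L,
          ((1/2)*(b i)^2 - ptil i * b i - ((1/2)*(a i)^2 - ptil i * a i)) := by
        rw [Finset.mul_sum, Finset.mul_sum]
        simp [Finset.sum_sub_distrib]
    _ = ∑ i ∈ Finset.range L,
          ((b i - a i)*(a i - ptil i) + (1/2)*(b i - a i)^2) :=
        Finset.sum_congr rfl (fun i _ => by ring)
    _ = ∑ i ∈ Finset.range L, (b i - a i)*(a i - ptil i)
          + (1/2)*∑ i ∈ Finset.range L, (b i - a i)^2 := by
        rw [Finset.sum_add_distrib, Finset.mul_sum]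

lemma dPsi_zero (ptil : ℕ → ℝ) (π : ℕ → ℝ) : dPsi ptil 0 π = 0 := by
  simp [dPsi]

lemma Psi_perturb (ptil : ℕ → ℝ) (L : ℕ) (π : ℕ → ℝ) (hπ : MemML L π)
    (j : ℕ) (hj1 : 1 ≤ j) (hjL : j ≤ L) (t : ℝ) (ht : 0 ≤ π j + t) :
    MemML L (fun k => if k = j then π j + t else π k) ∧
    Psi ptil (fun k => if k = j then π j + t else π k) - Psi ptil π
      = t * dPsi ptil j π + t^2 * ((1/2) * ∑ i ∈ Finset.range L, (Tri j i)^2) := by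
  obtain ⟨h0, hnn, hsup⟩ := hπ
  set μ : ℕ → ℝ := fun k => if k = j then π j + t else π k with hμdef
  have hμmem : MemML L μ := by
    refine ⟨?_, ?_, ?_⟩
    · simp only [hμdef]; rw [if_neg (by omega)]; exact h0
    · intro k; simp only [hμdef]; split_ifs with h
      · exact ht
      · exact hnn k
    · intro k hk; simp only [hμdef]; rw [if_neg (by omega)]; exact hsup k hk
  refine ⟨hμmem, ?_⟩
  rw [Psi_diff ptil L π μ hsup hμmem.2.2]
  have hsub : ∀ k, μ k - π k = if k = j then t else 0 := by
    intro k; simp only [hμdef]; split_ifs with h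
    · subst h; ring
    · ring
  have e1 : ∑ k ∈ Finset.range (L+1), (μ k - π k) * dPsi ptil k π
      = t * dPsi ptil j π := by
    rw [Finset.sum_eq_single j]
    · rw [hsub j, if_pos rfl]
    · intro k _ hkj
      rw [hsub k, if_neg hkj, zero_mul]
    · intro hj
      exact absurd (Finset.mem_range.mpr (by omega)) hj
  have e2 : ∀ i, (∑ k ∈ Finset.range (L+1), μ k * Tri k i)
      - ∑ k ∈ Finset.range (L+1), π k * Tri k i = t * Tri j i := by
    intro i
    rw [← Finset.sum_sub_distrib]
    have : ∀ k ∈ Finset.range (L+1), μ k * Tri k i - π k * Tri k i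
        = (if k = j then t else 0) * Tri k i := by
      intro k _
      rw [← sub_mul, hsub k]
    rw [Finset.sum_congr rfl this, Finset.sum_eq_single j]
    · rw [if_pos rfl]
    · intro k _ hkj; rw [if_neg hkj, zero_mul]
    · intro hj; exact absurd (Finset.mem_range.mpr (by omega)) hj
  rw [e1]
  congr 1
  simp_rw [e2, mul_pow]
  rw [← Finset.mul_sum]
  ring

/-- Lemma 12: for `L ≥ s̃ + 1` and `π ∈ ℳ^L`, `π` minimizes `Ψ` over `ℳ^L` iff
`d_j(Ψ)(π) ≥ 0` for all `1 ≤ j ≤ L` and `d_j(Ψ)(π) = 0` for all `j` in the support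
of `π`. -/
theorem stmt_16 (ptil : ℕ → ℝ) (hptil : IsFinPMF ptil)
    (stil : ℕ) (hstil : IsMaxSupport ptil stil)
    (L : ℕ) (hL : stil + 1 ≤ L)
    (π : ℕ → ℝ) (hπ : MemML L π) :
    (∀ μ : ℕ → ℝ, MemML L μ → Psi ptil π ≤ Psi ptil μ) ↔
      ((∀ j : ℕ, 1 ≤ j → j ≤ L → 0 ≤ dPsi ptil j π) ∧
       (∀ j : ℕ, 1 ≤ j → j ≤ L → π j ≠ 0 → dPsi ptil j π = 0)) := by
  obtain ⟨h0, hnn, hsup⟩ := hπ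
  have hπ' : MemML L π := ⟨h0, hnn, hsup⟩
  constructor
  · intro hmin
    have hC : ∀ j : ℕ, 1 ≤ j → j ≤ L → 0 < ∑ i ∈ Finset.range L, (Tri j i)^2 := by
      intro j hj1 hjL
      have h0mem : (0:ℕ) ∈ Finset.range L := Finset.mem_range.mpr (by omega)
      have hle := Finset.single_le_sum (f := fun i => (Tri j i)^2)
        (fun i _ => sq_nonneg _) h0mem
      have hp : 0 < (Tri j 0)^2 := pow_pos (Tri_zero_pos hj1) 2
      linarith
    have hge : ∀ j : ℕ, 1 ≤ j → j ≤ L → 0 ≤ dPsi ptil j π := by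
      intro j hj1 hjL
      by_contra hneg
      push_neg at hneg
      set C := ∑ i ∈ Finset.range L, (Tri j i)^2 with hCdef
      have hCpos : 0 < C := hC j hj1 hjL
      have hC0 : C ≠ 0 := ne_of_gt hCpos
      set d := dPsi ptil j π with hd
      have htpos : 0 < -d / C := div_pos (by linarith) hCpos
      obtain ⟨hmem, heq⟩ := Psi_perturb ptil L π hπ' j hj1 hjL (-d / C)
        (by have := hnn j; linarith)
      have h1 := hmin _ hmem
      have h3 : 0 ≤ (-d/C) * d + (-d/C)^2 * ((1/2)*C) := by rw [← heq]; linarith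
      have hval : (-d/C) * d + (-d/C)^2 * ((1/2)*C) = -(d^2/(2*C)) := by
        field_simp
        ring
      rw [hval] at h3
      have hd2 : 0 < d^2 := by nlinarith
      have : 0 < d^2 / (2*C) := div_pos hd2 (by linarith)
      linarith
    refine ⟨hge, ?_⟩
    intro j hj1 hjL hπj
    have hd0 := hge j hj1 hjL
    by_contra hne
    have hdpos : 0 < dPsi ptil j π := lt_of_le_of_ne hd0 (Ne.symm hne)
    set C := ∑ i ∈ Finset.range L, (Tri j i)^2 with hCdef
    have hCpos : 0 < C := hC j hj1 hjL
    set d := dPsi ptil j π with hd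
    have hπjpos : 0 < π j := lt_of_le_of_ne (hnn j) (Ne.symm hπj)
    set s : ℝ := min (π j) (d / C) with hsdef
    have hspos : 0 < s := lt_min hπjpos (div_pos hdpos hCpos)
    have hs1 : s ≤ π j := min_le_left _ _
    have hsC : s * C ≤ d := by
      have h4 : s ≤ d / C := min_le_right _ _
      rwa [le_div_iff₀ hCpos] at h4
    obtain ⟨hmem, heq⟩ := Psi_perturb ptil L π hπ' j hj1 hjL (-s) (by linarith)
    have h1 := hmin _ hmem
    have h3 : 0 ≤ (-s) * d + (-s)^2 * ((1/2)*C) := by rw [← heq]; linarith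
    nlinarith [mul_le_mul_of_nonneg_left hsC hspos.le, mul_pos hspos hdpos]
  · rintro ⟨hge, heq⟩ μ hμ
    have hdiff := Psi_diff ptil L π μ hsup hμ.2.2
    have hS : 0 ≤ ∑ j ∈ Finset.range (L+1), (μ j - π j) * dPsi ptil j π := by
      apply Finset.sum_nonneg
      intro k hk
      simp only [Finset.mem_range] at hk
      rcases Nat.eq_zero_or_pos k with rfl | hk1
      · rw [dPsi_zero, mul_zero]
      · by_cases hπk : π k = 0
        · apply mul_nonneg
          · rw [hπk, sub_zero]; exact hμ.2.1 k
          · exact hge k hk1 (by omega)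
        · rw [heq k hk1 (by omega) hπk, mul_zero]
    have hQ : 0 ≤ (1/2) * ∑ i ∈ Finset.range L,
        ((∑ j ∈ Finset.range (L+1), μ j * Tri j i)
          - ∑ j ∈ Finset.range (L+1), π j * Tri j i)^2 := by
      apply mul_nonneg (by norm_num)
      exact Finset.sum_nonneg (fun i _ => sq_nonneg _)
    linarith
end
end
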